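/- arXiv:2412.05268 — 2 statements merged into one kernel-verified Lean document; each statement's English description precedes it below -/
import Mathlib

section
/- Let n_M, n_N, k, d be natural numbers, match : Fin n_N → Fin n_M, and let Π ∈ ℝ^{n_N×n_M} be the binary matrix with Π_{j,i} = 1 if i = match(j) and 0 otherwise. Let Φ_M ∈ ℝ^{n_M×k}, Φ_N ∈ ℝ^{n_N×k}, A_M ∈ ℝ^{n_M×n_M}, A_N ∈ ℝ^{n_N×n_N}, C ∈ ℝ^{k×k}, f ∈ ℝ^{n_M×d}, g ∈ ℝ^{n_N×d}, D : Fin n_M → Fin n_N → ℝ, s ∈ ℝ with s > 0, and set F := Φ_Mᵀ·A_M·f, G := Φ_Nᵀ·A_N·g. Assume (i) ‖f_i − g_j‖₂ = s·D(i, j) for all rows i, j, (ii) Π = Φ_N·C·(Φ_Mᵀ·A_M), and (iii) g = Φ_N·G. Then the total semantic distance of the matching is bounded by the functional-map feature objective: s · √(Σ_j D(match(j), j)²) ≤ ‖Φ_N‖ · ‖C·F − G‖_F, where ‖·‖_F is the Frobenius norm and ‖Φ_N‖ the ℓ²→ℓ² operator norm. -/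
open Matrix

/-- The Frobenius norm of a real matrix. -/
noncomputable def frobNorm {m n : ℕ} (M : Matrix (Fin m) (Fin n) ℝ) : ℝ :=
  Real.sqrt (∑ i, ∑ j, (M i j) ^ 2)

/-- The ℓ²→ℓ² operator norm of a real matrix. -/
noncomputable def l2OpNorm {m n : ℕ} (M : Matrix (Fin m) (Fin n) ℝ) : ℝ :=
  ‖LinearMap.toContinuousLinearMap (Matrix.toEuclideanLin M)‖

lemma mulVec_norm_le {m n : ℕ} (M : Matrix (Fin m) (Fin n) ℝ) (x : Fin n → ℝ) :
    Real.sqrt (∑ i, (M.mulVec x i) ^ 2) ≤ l2OpNorm M * Real.sqrt (∑ j, (x j) ^ 2) := by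
  have h := (LinearMap.toContinuousLinearMap (Matrix.toEuclideanLin M)).le_opNorm
    ((WithLp.equiv 2 (Fin n → ℝ)).symm x)
  have h1 : ‖(LinearMap.toContinuousLinearMap (Matrix.toEuclideanLin M))
      ((WithLp.equiv 2 (Fin n → ℝ)).symm x)‖ = Real.sqrt (∑ i, (M.mulVec x i) ^ 2) := by
    rw [LinearMap.coe_toContinuousLinearMap']
    rw [WithLp.equiv_symm_apply, Matrix.toEuclideanLin_apply_piLp_toLp]
    rw [EuclideanSpace.norm_eq]
    congr 1
    apply Finset.sum_congr rfl
    intro i _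
    rw [Real.norm_eq_abs, sq_abs]
  have h2 : ‖(WithLp.equiv 2 (Fin n → ℝ)).symm x‖ = Real.sqrt (∑ j, (x j) ^ 2) := by
    rw [EuclideanSpace.norm_eq]
    congr 1
    apply Finset.sum_congr rfl
    intro j _
    rw [Real.norm_eq_abs, sq_abs]
    rfl
  rw [h1, h2] at h
  exact h

lemma frob_mul_le {m n d : ℕ} (M : Matrix (Fin m) (Fin n) ℝ) (X : Matrix (Fin n) (Fin d) ℝ) :
    frobNorm (M * X) ≤ l2OpNorm M * frobNorm X := by
  have hop : 0 ≤ l2OpNorm M := norm_nonneg _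
  have key : ∑ i, ∑ p, ((M * X) i p) ^ 2 ≤ (l2OpNorm M) ^ 2 * ∑ i, ∑ p, (X i p) ^ 2 := by
    rw [Finset.sum_comm, Finset.sum_comm (γ := Fin n), Finset.mul_sum]
    apply Finset.sum_le_sum
    intro p _
    have h := mulVec_norm_le M (fun j => X j p)
    have h' := mul_self_le_mul_self (Real.sqrt_nonneg _) h
    rw [Real.mul_self_sqrt (Finset.sum_nonneg fun i _ => sq_nonneg _)] at h'
    calc ∑ i, ((M * X) i p) ^ 2 = ∑ i, (M.mulVec (fun j => X j p) i) ^ 2 := by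
          simp [Matrix.mul_apply, Matrix.mulVec, dotProduct]
      _ ≤ (l2OpNorm M * Real.sqrt (∑ j, (X j p) ^ 2)) *
            (l2OpNorm M * Real.sqrt (∑ j, (X j p) ^ 2)) := h'
      _ = (l2OpNorm M) ^ 2 * (Real.sqrt (∑ j, (X j p) ^ 2)) ^ 2 := by ring
      _ = (l2OpNorm M) ^ 2 * ∑ j, (X j p) ^ 2 := by
          rw [Real.sq_sqrt (Finset.sum_nonneg fun i _ => sq_nonneg _)]
  unfold frobNorm
  calc Real.sqrt (∑ i, ∑ p, ((M * X) i p) ^ 2)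
      ≤ Real.sqrt ((l2OpNorm M) ^ 2 * ∑ i, ∑ p, (X i p) ^ 2) := Real.sqrt_le_sqrt key
    _ = l2OpNorm M * Real.sqrt (∑ i, ∑ p, (X i p) ^ 2) := by
        rw [Real.sqrt_mul (sq_nonneg _), Real.sqrt_sq hop]

/-- The total semantic distance of a matching is bounded by the functional-map
feature objective: `s √(Σ_j D(match j, j)²) ≤ ‖Φ_N‖ ‖C F − G‖_F`. -/
theorem semantic_distance_le_functional_map_objective (nM nN k d : ℕ)
    (mtch : Fin nN → Fin nM)
    (Pi : Matrix (Fin nN) (Fin nM) ℝ)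
    (hPi : ∀ j i, Pi j i = if i = mtch j then 1 else 0)
    (ΦM : Matrix (Fin nM) (Fin k) ℝ) (ΦN : Matrix (Fin nN) (Fin k) ℝ)
    (AM : Matrix (Fin nM) (Fin nM) ℝ) (AN : Matrix (Fin nN) (Fin nN) ℝ)
    (C : Matrix (Fin k) (Fin k) ℝ)
    (f : Matrix (Fin nM) (Fin d) ℝ) (g : Matrix (Fin nN) (Fin d) ℝ)
    (D : Fin nM → Fin nN → ℝ) (s : ℝ) (hs : 0 < s)
    (F G : Matrix (Fin k) (Fin d) ℝ)
    (hF : F = ΦMᵀ * AM * f) (hG : G = ΦNᵀ * AN * g)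
    (hdist : ∀ (i : Fin nM) (j : Fin nN),
      Real.sqrt (∑ p, (f i p - g j p) ^ 2) = s * D i j)
    (hrep : Pi = ΦN * C * (ΦMᵀ * AM))
    (hg : g = ΦN * G) :
    s * Real.sqrt (∑ j : Fin nN, (D (mtch j) j) ^ 2) ≤
      l2OpNorm ΦN * frobNorm (C * F - G) := by
  -- ΦN * (C * F - G) = Pi * f - g
  have hkey : ΦN * (C * F - G) = Pi * f - g := by
    rw [Matrix.mul_sub, hF, hrep, hg]
    rw [Matrix.mul_assoc, Matrix.mul_assoc, Matrix.mul_assoc, Matrix.mul_assoc]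
  -- Frobenius norm of Pi * f - g equals s * sqrt(∑ D²)
  have hfrob : frobNorm (Pi * f - g) = s * Real.sqrt (∑ j : Fin nN, (D (mtch j) j) ^ 2) := by
    unfold frobNorm
    have hentry : ∀ j p, (Pi * f - g) j p = f (mtch j) p - g j p := by
      intro j p
      simp only [Matrix.sub_apply, Matrix.mul_apply, hPi]
      congr 1
      rw [Finset.sum_eq_single (mtch j)]
      · simp
      · intro i _ hi; simp [hi]
      · simp
    have hsum : ∀ j : Fin nN, ∑ p, ((Pi * f - g) j p) ^ 2 = s ^ 2 * (D (mtch j) j) ^ 2 := by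
      intro j
      have h1 : ∑ p, ((Pi * f - g) j p) ^ 2 = ∑ p, (f (mtch j) p - g j p) ^ 2 := by
        apply Finset.sum_congr rfl; intro p _; rw [hentry]
      rw [h1]
      have h2 := hdist (mtch j) j
      have h3 : ∑ p, (f (mtch j) p - g j p) ^ 2 =
          (Real.sqrt (∑ p, (f (mtch j) p - g j p) ^ 2)) ^ 2 := by
        rw [Real.sq_sqrt (Finset.sum_nonneg fun p _ => sq_nonneg _)]
      rw [h3, h2]; ring
    have : ∑ j, ∑ p, ((Pi * f - g) j p) ^ 2 = s ^ 2 * ∑ j : Fin nN, (D (mtch j) j) ^ 2 := by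
      rw [Finset.mul_sum]
      exact Finset.sum_congr rfl fun j _ => hsum j
    rw [this, Real.sqrt_mul (sq_nonneg _), Real.sqrt_sq hs.le]
  rw [← hfrob, ← hkey]
  exact frob_mul_le ΦN (C * F - G)
end

section
/- Let n_M, n_N, k be natural numbers; let A_M, W_M be n_M×n_M real matrices with A_M invertible, A_N, W_N be n_N×n_N real matrices with A_N invertible, Λ_M, Λ_N be k×k real diagonal matrices, and Φ_M ∈ ℝ^{n_M×k}, Φ_N ∈ ℝ^{n_N×k} satisfy W_M·Φ_M = A_M·Φ_M·Λ_M, W_N·Φ_N = A_N·Φ_N·Λ_N, Φ_Mᵀ·A_M·Φ_M = I_k, and Φ_Nᵀ·A_N·Φ_N = I_k. Let C ∈ ℝ^{k×k} and Π := Φ_N·C·(Φ_Mᵀ·A_M). Then Π commutes with the Laplace–Beltrami operators on the span of the source basis — i.e., Π·(A_M⁻¹·W_M·(Φ_M·X)) = A_N⁻¹·W_N·(Π·(Φ_M·X)) for all X ∈ ℝᵏ — if and only if C·Λ_M = Λ_N·C. -/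
open Matrix

lemma matrix_eq_of_forall_mulVec {m n : ℕ} {M N : Matrix (Fin m) (Fin n) ℝ}
    (h : ∀ x, M *ᵥ x = N *ᵥ x) : M = N := by
  ext i j
  have := congrFun (h (Pi.single j 1)) i
  simpa using this

/-- The functional-map point map `Π = Φ_N * C * Φ_M⁺` commutes with the discrete
Laplace–Beltrami operators on the span of the source spectral basis if and only if
the functional map matrix `C` intertwines the eigenvalue matrices:
`C * Λ_M = Λ_N * C`. -/
theorem laplacian_commutativity_iff_isometry_constraint (nM nN k : ℕ)
    (AM WM : Matrix (Fin nM) (Fin nM) ℝ) [Invertible AM]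
    (AN WN : Matrix (Fin nN) (Fin nN) ℝ) [Invertible AN]
    (ΛM ΛN : Matrix (Fin k) (Fin k) ℝ) (hΛM : ΛM.IsDiag) (hΛN : ΛN.IsDiag)
    (ΦM : Matrix (Fin nM) (Fin k) ℝ) (ΦN : Matrix (Fin nN) (Fin k) ℝ)
    (hEigM : WM * ΦM = AM * ΦM * ΛM) (hEigN : WN * ΦN = AN * ΦN * ΛN)
    (hOrthM : ΦMᵀ * AM * ΦM = 1) (hOrthN : ΦNᵀ * AN * ΦN = 1)
    (C : Matrix (Fin k) (Fin k) ℝ)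
    (Pi : Matrix (Fin nN) (Fin nM) ℝ)
    (hPi : Pi = ΦN * C * (ΦMᵀ * AM)) :
    (∀ X : Fin k → ℝ,
        Pi *ᵥ ((AM⁻¹ * WM) *ᵥ (ΦM *ᵥ X)) = (AN⁻¹ * WN) *ᵥ (Pi *ᵥ (ΦM *ᵥ X))) ↔
      C * ΛM = ΛN * C := by
  have hM : AM⁻¹ * WM * ΦM = ΦM * ΛM := by
    rw [Matrix.mul_assoc, hEigM, ← Matrix.mul_assoc, ← Matrix.mul_assoc,
      Matrix.inv_mul_of_invertible, Matrix.one_mul]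
  have hN : AN⁻¹ * WN * ΦN = ΦN * ΛN := by
    rw [Matrix.mul_assoc, hEigN, ← Matrix.mul_assoc, ← Matrix.mul_assoc,
      Matrix.inv_mul_of_invertible, Matrix.one_mul]
  have hPiΦ : Pi * ΦM = ΦN * C := by
    rw [hPi, Matrix.mul_assoc, Matrix.mul_assoc, hOrthM, Matrix.mul_one]
  have hL : Pi * (AM⁻¹ * WM * ΦM) = ΦN * (C * ΛM) := by
    rw [hM, ← Matrix.mul_assoc, hPiΦ, Matrix.mul_assoc]
  have hR : AN⁻¹ * WN * (Pi * ΦM) = ΦN * (ΛN * C) := by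
    rw [hPiΦ, ← Matrix.mul_assoc, hN, Matrix.mul_assoc]
  constructor
  · intro h
    have heq : Pi * (AM⁻¹ * WM * ΦM) = AN⁻¹ * WN * (Pi * ΦM) := by
      apply matrix_eq_of_forall_mulVec
      intro x
      have := h x
      simpa [Matrix.mulVec_mulVec, Matrix.mul_assoc] using this
    have h2 : ΦN * (C * ΛM) = ΦN * (ΛN * C) := by rw [← hL, ← hR, heq]
    have h3 : ΦNᵀ * AN * (ΦN * (C * ΛM)) = ΦNᵀ * AN * (ΦN * (ΛN * C)) := by rw [h2]
    rw [← Matrix.mul_assoc, hOrthN, Matrix.one_mul, ← Matrix.mul_assoc, hOrthN,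
      Matrix.one_mul] at h3
    exact h3
  · intro h X
    have heq : Pi * (AM⁻¹ * WM * ΦM) = AN⁻¹ * WN * (Pi * ΦM) := by
      rw [hL, hR, h]
    calc Pi *ᵥ ((AM⁻¹ * WM) *ᵥ (ΦM *ᵥ X))
        = (Pi * (AM⁻¹ * WM * ΦM)) *ᵥ X := by
          simp [Matrix.mulVec_mulVec, Matrix.mul_assoc]
      _ = (AN⁻¹ * WN * (Pi * ΦM)) *ᵥ X := by rw [heq]
      _ = (AN⁻¹ * WN) *ᵥ (Pi *ᵥ (ΦM *ᵥ X)) := by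
          simp [Matrix.mulVec_mulVec, Matrix.mul_assoc]
end
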